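/- Let k ≥ 2 and r ≥ 1, and let H be a graph such that every r-colouring of the edges of H contains a monochromatic cycle of length k, but for every edge e of H, the graph H - e admits an r-colouring of its edges with no monochromatic cycle of length k. Then every vertex of H that is incident to at least one edge has degree at least r + 1. -/

import Mathlib

/-- `HasMonoCycle H k r c` means the edge-colouring `c` of `H` (with `r` colours)
admits a monochromatic cycle of length `k`. -/
def HasMonoCycle {V : Type*} (H : SimpleGraph V) (k r : ℕ) (c : Sym2 V → Fin r) : Prop :=
  ∃ (i : Fin r) (v : V) (w : H.Walk v v), w.IsCycle ∧ w.length = k ∧ ∀ e ∈ w.edges, c e = i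

theorem stmt_5 {V : Type*} [Fintype V] (H : SimpleGraph V) [DecidableRel H.Adj]
    (k r : ℕ) (hk : 2 ≤ k) (hr : 1 ≤ r)
    (hRam : ∀ c : Sym2 V → Fin r, HasMonoCycle H k r c)
    (hmin : ∀ e ∈ H.edgeSet, ∃ c : Sym2 V → Fin r,
      ¬ HasMonoCycle (H.deleteEdges {e}) k r c) :
    ∀ v : V, 0 < H.degree v → r + 1 ≤ H.degree v := by
  classical
  intro v hv
  by_contra hlt
  push_neg at hlt
  have hdeg : H.degree v ≤ r := Nat.lt_succ_iff.mp hlt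
  obtain ⟨w, hw⟩ := (H.degree_pos_iff_exists_adj v).mp hv
  set e : Sym2 V := s(v, w) with he_def
  have he : e ∈ H.edgeSet := hw
  obtain ⟨c, hc⟩ := hmin e he
  -- find a colour unused by `c` on edges at `v` other than `e`
  set S : Finset V := (H.neighborFinset v).erase w with hS
  have hScard : S.card < r := by
    have h1 : S.card = H.degree v - 1 := by
      rw [hS, Finset.card_erase_of_mem (by simpa using hw)]
      rfl
    omega
  have hex : ∃ i : Fin r, i ∉ S.image fun u => c s(v, u) := by
    by_contra h
    push_neg at h
    have h1 : (Finset.univ : Finset (Fin r)) ⊆ S.image fun u => c s(v, u) :=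
      fun i _ => h i
    have h2 := Finset.card_le_card h1
    have h3 : (S.image fun u => c s(v, u)).card ≤ S.card := Finset.card_image_le
    rw [Finset.card_univ, Fintype.card_fin] at h2
    omega
  obtain ⟨i, hi⟩ := hex
  have hi' : ∀ u, H.Adj v u → u ≠ w → c s(v, u) ≠ i := by
    intro u hadj hne hcol
    exact hi (Finset.mem_image.mpr ⟨u, by simp [hS, hne, hadj], hcol⟩)
  -- define the extended colouring
  set c' : Sym2 V → Fin r := fun x => if x = e then i else c x with hc'
  have hc'ne : ∀ x, x ≠ e → c' x = c x := fun x hx => if_neg hx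
  have hc'e : c' e = i := if_pos rfl
  obtain ⟨j, u0, W, hcyc, hlen, hmono⟩ := hRam c'
  by_cases heW : e ∈ W.edges
  · -- the cycle uses `e`; it has another edge at `v` of colour `i`, contradiction
    have hj : j = i := by
      have := hmono e heW
      rw [hc'e] at this
      exact this.symm
    subst hj
    have hvW : v ∈ W.support := W.fst_mem_support_of_mem_edges heW
    set W' := W.rotate v hvW with hW'
    have hcyc' : W'.IsCycle := hcyc.rotate hvW
    have hedges : ∀ x, x ∈ W'.edges ↔ x ∈ W.edges :=
      fun x => (W.rotate_edges v hvW).mem_iff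
    -- first edge of W'
    obtain ⟨x, hadjx, q, hq⟩ := SimpleGraph.Walk.not_nil_iff.mp hcyc'.not_nil
    have hxe : s(v, x) ∈ W'.edges := by rw [hq]; simp
    -- last edge of W' : use reverse of q
    have hqnil : ¬ q.Nil := by
      intro hn
      have := SimpleGraph.Walk.nil_iff_length_eq.mp hn
      have h3 := hcyc'.three_le_length
      rw [hq] at h3
      simp [this] at h3
    have hqrnil : ¬ q.reverse.Nil := by
      rwa [SimpleGraph.Walk.not_nil_iff_lt_length, SimpleGraph.Walk.length_reverse,
        ← SimpleGraph.Walk.not_nil_iff_lt_length]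
    obtain ⟨y, hadjy, q2, hq2⟩ := SimpleGraph.Walk.not_nil_iff.mp hqrnil
    have hye : s(v, y) ∈ q.edges := by
      have : s(v, y) ∈ q.reverse.edges := by rw [hq2]; simp
      simpa using this
    have hye' : s(v, y) ∈ W'.edges := by
      rw [hq]; simp [hye]
    -- the two edges are distinct
    have hnodup := hcyc'.edges_nodup
    rw [hq] at hnodup
    simp only [SimpleGraph.Walk.edges_cons, List.nodup_cons] at hnodup
    have hxy : s(v, x) ≠ s(v, y) := by
      intro hxy
      exact hnodup.1 (hxy ▸ hye)
    -- one of them is not e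
    have key : ∀ z, H.Adj v z → s(v, z) ∈ W'.edges → s(v, z) ≠ e → False := by
      intro z hadjz hze hzne
      have hzw : z ≠ w := fun h => hzne (by rw [he_def, h])
      have := hmono s(v, z) ((hedges _).mp hze)
      rw [hc'ne _ hzne] at this
      exact hi' z hadjz hzw this
    by_cases hxE : s(v, x) = e
    · exact key y hadjy hye' (fun h => hxy (hxE.trans h.symm))
    · exact key x hadjx hxe hxE
  · -- the cycle avoids `e`: transfer it to `H.deleteEdges {e}`
    apply hc
    have hsub : ∀ x ∈ W.edges, x ∈ (H.deleteEdges {e}).edgeSet := by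
      intro x hx
      rw [SimpleGraph.edgeSet_deleteEdges]
      exact ⟨W.edges_subset_edgeSet hx, fun h => heW (by rwa [Set.mem_singleton_iff.mp h] at hx)⟩
    refine ⟨j, u0, W.transfer _ hsub, hcyc.transfer hsub, ?_, ?_⟩
    · rw [SimpleGraph.Walk.length_transfer]; exact hlen
    · intro x hx
      rw [SimpleGraph.Walk.edges_transfer] at hx
      have := hmono x hx
      have hxne : x ≠ e := fun h => heW (h ▸ hx)
      rwa [hc'ne _ hxne] at this
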